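/- Let ι be a D2 Frobenius 1-morphism with D2 quasi-basis ∑ᵢ yᵢ ⊗ xᵢ. Then the ring homomorphism s_L : L → A, l ↦ l × ῑ, from L = C²(ι,ι) to A = C²(ι×ῑ, ι×ῑ) is a Frobenius extension: the L-bimodule map φ_L : A → L, φ_L(a) = (ι × ev_L) ∘ (a × ι) ∘ (ι × coev_R) (with appropriate coherence cells), satisfies ∑ᵢ s_L(φ_L(a ∘ yᵢ)) ∘ xᵢ = a = ∑ᵢ yᵢ ∘ s_L(φ_L(xᵢ ∘ a)) for all a ∈ A. -/
import Mathlib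


open CategoryTheory Bicategory

universe w v u

variable {C : Type u} [Bicategory.{w, v} C] {a b : C}

/-- Duality data exhibiting `κ` as a two-sided dual of `ι`: `(evL, coevL)` exhibit a
left-dual pair and `(evR, coevR)` a right-dual pair, all four snake identities holding. -/
structure FrobeniusDuality (ι : a ⟶ b) (κ : b ⟶ a) where
  evL : κ ≫ ι ⟶ 𝟙 b
  coevL : 𝟙 a ⟶ ι ≫ κ
  evR : ι ≫ κ ⟶ 𝟙 a
  coevR : 𝟙 b ⟶ κ ≫ ι
  zig1 : (λ_ ι).inv ≫ coevL ▷ ι ≫ (α_ ι κ ι).hom ≫ ι ◁ evL ≫ (ρ_ ι).hom = 𝟙 ι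
  zig2 : (ρ_ κ).inv ≫ κ ◁ coevL ≫ (α_ κ ι κ).inv ≫ evL ▷ κ ≫ (λ_ κ).hom = 𝟙 κ
  zig3 : (ρ_ ι).inv ≫ ι ◁ coevR ≫ (α_ ι κ ι).inv ≫ evR ▷ ι ≫ (λ_ ι).hom = 𝟙 ι
  zig4 : (λ_ κ).inv ≫ coevR ▷ κ ≫ (α_ κ ι κ).hom ≫ κ ◁ evR ≫ (ρ_ κ).hom = 𝟙 κ

namespace FrobeniusDuality

variable {ι : a ⟶ b} {κ : b ⟶ a} (D : FrobeniusDuality ι κ)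

/-- The Fourier transformation `F`, bending the legs of a 2-endomorphism of `ι ≫ κ`
using `coevR` and `evL`. -/
def Ftr (x : ι ≫ κ ⟶ ι ≫ κ) : κ ≫ ι ⟶ κ ≫ ι :=
  (λ_ (κ ≫ ι)).inv ≫ D.coevR ▷ (κ ≫ ι) ≫ (α_ κ ι (κ ≫ ι)).hom ≫
    κ ◁ ((α_ ι κ ι).inv ≫ x ▷ ι ≫ (α_ ι κ ι).hom) ≫
    (α_ κ ι (κ ≫ ι)).inv ≫ (κ ≫ ι) ◁ D.evL ≫ (ρ_ (κ ≫ ι)).hom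

/-- The inverse Fourier transformation, bending legs using `coevL` and `evR`. -/
def FtrInv (y : κ ≫ ι ⟶ κ ≫ ι) : ι ≫ κ ⟶ ι ≫ κ :=
  (ρ_ (ι ≫ κ)).inv ≫ (ι ≫ κ) ◁ D.coevL ≫ (α_ ι κ (ι ≫ κ)).hom ≫
    ι ◁ ((α_ κ ι κ).inv ≫ y ▷ κ ≫ (α_ κ ι κ).hom) ≫
    (α_ ι κ (ι ≫ κ)).inv ≫ D.evR ▷ (ι ≫ κ) ≫ (λ_ (ι ≫ κ)).hom

/-- The second Fourier transformation `Ḟ`, with `coevR` and `evL` attached on the other sides. -/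
def Fdot (x : ι ≫ κ ⟶ ι ≫ κ) : κ ≫ ι ⟶ κ ≫ ι :=
  (ρ_ (κ ≫ ι)).inv ≫ (κ ≫ ι) ◁ D.coevR ≫ (α_ κ ι (κ ≫ ι)).hom ≫
    κ ◁ ((α_ ι κ ι).inv ≫ x ▷ ι ≫ (α_ ι κ ι).hom) ≫
    (α_ κ ι (κ ≫ ι)).inv ≫ D.evL ▷ (κ ≫ ι) ≫ (λ_ (κ ≫ ι)).hom

/-- The inverse of the second Fourier transformation. -/
def FdotInv (y : κ ≫ ι ⟶ κ ≫ ι) : ι ≫ κ ⟶ ι ≫ κ :=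
  (λ_ (ι ≫ κ)).inv ≫ D.coevL ▷ (ι ≫ κ) ≫ (α_ ι κ (ι ≫ κ)).hom ≫
    ι ◁ ((α_ κ ι κ).inv ≫ y ▷ κ ≫ (α_ κ ι κ).hom) ≫
    (α_ ι κ (ι ≫ κ)).inv ≫ (ι ≫ κ) ◁ D.evR ≫ (ρ_ (ι ≫ κ)).hom

/-- The convolution product on `C²(ι×κ, ι×κ)`, contracting the middle legs with
`coevR` and `evL`.  (Vertical composition in the paper is `x ∘ y = y ≫ x`.) -/
def conv (x y : ι ≫ κ ⟶ ι ≫ κ) : ι ≫ κ ⟶ ι ≫ κ :=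
  ι ◁ (λ_ κ).inv ≫ ι ◁ (D.coevR ▷ κ) ≫ ι ◁ (α_ κ ι κ).hom ≫
    (α_ ι κ (ι ≫ κ)).inv ≫ x ▷ (ι ≫ κ) ≫ (ι ≫ κ) ◁ y ≫
    (α_ ι κ (ι ≫ κ)).hom ≫ ι ◁ (α_ κ ι κ).inv ≫ ι ◁ (D.evL ▷ κ) ≫ ι ◁ (λ_ κ).hom

/-- The convolution product on `C²(κ×ι, κ×ι)`, contracting the middle legs with
`coevL` and `evR`. -/
def convB (x y : κ ≫ ι ⟶ κ ≫ ι) : κ ≫ ι ⟶ κ ≫ ι :=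
  κ ◁ (λ_ ι).inv ≫ κ ◁ (D.coevL ▷ ι) ≫ κ ◁ (α_ ι κ ι).hom ≫
    (α_ κ ι (κ ≫ ι)).inv ≫ x ▷ (κ ≫ ι) ≫ (κ ≫ ι) ◁ y ≫
    (α_ κ ι (κ ≫ ι)).hom ≫ κ ◁ (α_ ι κ ι).inv ≫ κ ◁ (D.evR ▷ ι) ≫ κ ◁ (λ_ ι).hom

/-- The convolution unit `i_A = coev_L ∘ ev_R`. -/
def iA : ι ≫ κ ⟶ ι ≫ κ := D.evR ≫ D.coevL

/-- The convolution unit `i_B = coev_R ∘ ev_L`. -/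
def iB : κ ≫ ι ⟶ κ ≫ ι := D.evL ≫ D.coevR

/-- The antipode `S_A = Ḟ⁻¹ ∘ F`. -/
def SA (x : ι ≫ κ ⟶ ι ≫ κ) : ι ≫ κ ⟶ ι ≫ κ := D.FdotInv (D.Ftr x)

/-- The inverse antipode `S_A⁻¹ = F⁻¹ ∘ Ḟ`. -/
def SAinv (x : ι ≫ κ ⟶ ι ≫ κ) : ι ≫ κ ⟶ ι ≫ κ := D.FtrInv (D.Fdot x)

/-- The anti-isomorphism `ν : L → R^op` (conjugation with `evR`/`coevR`). -/
def nu (l : ι ⟶ ι) : κ ⟶ κ :=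
  (λ_ κ).inv ≫ D.coevR ▷ κ ≫ (α_ κ ι κ).hom ≫ κ ◁ (l ▷ κ) ≫ κ ◁ D.evR ≫ (ρ_ κ).hom

/-- The anti-isomorphism `μ : L → R^op` (conjugation with `evL`/`coevL`). -/
def mu (l : ι ⟶ ι) : κ ⟶ κ :=
  (ρ_ κ).inv ≫ κ ◁ D.coevL ≫ (α_ κ ι κ).inv ≫ (κ ◁ l) ▷ κ ≫ D.evL ▷ κ ≫ (λ_ κ).hom

/-- The Frobenius map `φ_L : A → L`. -/
def phiL (x : ι ≫ κ ⟶ ι ≫ κ) : ι ⟶ ι :=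
  (ρ_ ι).inv ≫ ι ◁ D.coevR ≫ (α_ ι κ ι).inv ≫ x ▷ ι ≫ (α_ ι κ ι).hom ≫ ι ◁ D.evL ≫ (ρ_ ι).hom

/-- Source map of the left bialgebroid `s_L : L → A`, `l ↦ l × κ`. -/
def sL (_D : FrobeniusDuality ι κ) (l : ι ⟶ ι) : ι ≫ κ ⟶ ι ≫ κ := l ▷ κ

/-- Target map of the left bialgebroid `t_L : L → A`, `l ↦ ι × μ(l)`. -/
def tL (l : ι ⟶ ι) : ι ≫ κ ⟶ ι ≫ κ := ι ◁ D.mu l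

/-- Source map of the right bialgebroid `s_R : R → A`, `r ↦ ι × r`. -/
def sR (_D : FrobeniusDuality ι κ) (r : κ ⟶ κ) : ι ≫ κ ⟶ ι ≫ κ := ι ◁ r

/-- Target map of the right bialgebroid `t_R : R → A`, `r ↦ ν⁻¹(r) × κ`. -/
noncomputable def tR (r : κ ⟶ κ) : ι ≫ κ ⟶ ι ≫ κ :=
  (@Function.invFun (ι ⟶ ι) (κ ⟶ κ) ⟨𝟙 ι⟩ D.nu r) ▷ κ

/-- The counit `π_L(a) = φ_L(a ∘ i_A)`. -/
def piL (x : ι ≫ κ ⟶ ι ≫ κ) : ι ⟶ ι := D.phiL (D.iA ≫ x)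

/-- The counit `π_R(a) = ν(φ_L(S_A⁻¹(a) ∘ i_A))`. -/
def piR (x : ι ≫ κ ⟶ ι ≫ κ) : κ ⟶ κ := D.nu (D.phiL (D.iA ≫ D.SAinv x))

/-- The composite `(y × ι) ∘ α⁻¹ ∘ (ι × coevR) ∘ (ι × evL) ∘ α ∘ (x × ι)` appearing in
the depth-2 quasi-basis identity. -/
def d2comp (x y : ι ≫ κ ⟶ ι ≫ κ) : (ι ≫ κ) ≫ ι ⟶ (ι ≫ κ) ≫ ι :=
  x ▷ ι ≫ (α_ ι κ ι).hom ≫ ι ◁ D.evL ≫ ι ◁ D.coevR ≫ (α_ ι κ ι).inv ≫ y ▷ ι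

end FrobeniusDuality



namespace FrobeniusDuality

variable {ι : a ⟶ b} {κ : b ⟶ a} (D : FrobeniusDuality ι κ)

/-- Bottom cap for the first Frobenius identity: create an `(ι, κ)` pair on the right
using `coevL`. -/
def B1 : ι ≫ κ ⟶ ((ι ≫ κ) ≫ ι) ≫ κ :=
  (ρ_ (ι ≫ κ)).inv ≫ (ι ≫ κ) ◁ D.coevL ≫ (α_ (ι ≫ κ) ι κ).inv

/-- Top cap for the first Frobenius identity: contract the middle `(κ, ι)` pair with `evL`. -/
def T1 : ((ι ≫ κ) ≫ ι) ≫ κ ⟶ ι ≫ κ :=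
  (α_ (ι ≫ κ) ι κ).hom ≫ (α_ ι κ (ι ≫ κ)).hom ≫ ι ◁ (α_ κ ι κ).inv ≫
    ι ◁ (D.evL ▷ κ) ≫ ι ◁ (λ_ κ).hom

lemma snake1 : D.B1 ≫ D.T1 = 𝟙 (ι ≫ κ) := by
  have h : 𝟙 (ι ≫ κ) =
      ι ◁ ((ρ_ κ).inv ≫ κ ◁ D.coevL ≫ (α_ κ ι κ).inv ≫ D.evL ▷ κ ≫ (λ_ κ).hom) := by
    rw [D.zig2]; simp
  rw [h, B1, T1]
  bicategory

lemma L1a (z : ι ≫ κ ⟶ ι ≫ κ) : D.B1 ≫ (z ▷ ι) ▷ κ ≫ D.T1 = z := by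
  have : D.B1 ≫ (z ▷ ι) ▷ κ = z ≫ D.B1 := by
    rw [B1]
    simp only [Category.assoc]
    rw [← associator_inv_naturality_left]
    slice_lhs 2 3 => rw [whisker_exchange]
    simp
  rw [reassoc_of% this, snake1, Category.comp_id]

lemma B1_natural (z : ι ≫ κ ⟶ ι ≫ κ) : D.B1 ≫ (z ▷ ι) ▷ κ = z ≫ D.B1 := by
  rw [B1]
  simp only [Category.assoc]
  rw [← associator_inv_naturality_left]
  slice_lhs 2 3 => rw [whisker_exchange]
  simp

lemma L1b (x y z : ι ≫ κ ⟶ ι ≫ κ) :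
    D.B1 ≫ (D.d2comp x y) ▷ κ ≫ (z ▷ ι) ▷ κ ≫ D.T1 = x ≫ D.sL (D.phiL (y ≫ z)) := by
  rw [d2comp, sL]
  simp only [comp_whiskerRight, Category.assoc]
  rw [reassoc_of% (D.B1_natural x)]
  congr 1
  have key : D.B1 ≫ (α_ ι κ ι).hom ▷ κ ≫ (ι ◁ D.evL) ▷ κ ≫ (ι ◁ D.coevR) ▷ κ ≫
      (α_ ι κ ι).inv ▷ κ ≫ (y ▷ ι) ▷ κ ≫ (z ▷ ι) ▷ κ ≫ D.T1 =
      ι ◁ ((ρ_ κ).inv ≫ κ ◁ D.coevL ≫ (α_ κ ι κ).inv ≫ D.evL ▷ κ ≫ (λ_ κ).hom) ≫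
        (D.phiL (y ≫ z)) ▷ κ := by
    rw [phiL, B1, T1]
    simp only [comp_whiskerRight, Category.assoc]
    bicategory
  rw [key, D.zig2]
  simp

/-- Bottom cap for the second Frobenius identity: create a `(κ, ι)` pair in the middle
using `coevR`. -/
def B2 : ι ≫ κ ⟶ ((ι ≫ κ) ≫ ι) ≫ κ :=
  ι ◁ (λ_ κ).inv ≫ ι ◁ (D.coevR ▷ κ) ≫ ι ◁ (α_ κ ι κ).hom ≫
    (α_ ι κ (ι ≫ κ)).inv ≫ (α_ (ι ≫ κ) ι κ).inv

/-- Top cap for the second Frobenius identity: contract the right `(ι, κ)` pair with `evR`. -/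
def T2 : ((ι ≫ κ) ≫ ι) ≫ κ ⟶ ι ≫ κ :=
  (α_ (ι ≫ κ) ι κ).hom ≫ (ι ≫ κ) ◁ D.evR ≫ (ρ_ (ι ≫ κ)).hom

lemma T2_natural (z : ι ≫ κ ⟶ ι ≫ κ) : (z ▷ ι) ▷ κ ≫ D.T2 = D.T2 ≫ z := by
  rw [T2]
  slice_lhs 1 2 => rw [associator_naturality_left]
  slice_lhs 2 3 => rw [← whisker_exchange]
  simp

lemma snake2 : D.B2 ≫ D.T2 = 𝟙 (ι ≫ κ) := by
  have h : 𝟙 (ι ≫ κ) =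
      ι ◁ ((λ_ κ).inv ≫ D.coevR ▷ κ ≫ (α_ κ ι κ).hom ≫ κ ◁ D.evR ≫ (ρ_ κ).hom) := by
    rw [D.zig4]; simp
  rw [h, B2, T2]
  bicategory

lemma L2a (z : ι ≫ κ ⟶ ι ≫ κ) : D.B2 ≫ (z ▷ ι) ▷ κ ≫ D.T2 = z := by
  rw [T2_natural, reassoc_of% D.snake2]

lemma L2b (x y z : ι ≫ κ ⟶ ι ≫ κ) :
    D.B2 ≫ (z ▷ ι) ▷ κ ≫ (D.d2comp x y) ▷ κ ≫ D.T2 = D.sL (D.phiL (z ≫ x)) ≫ y := by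
  rw [d2comp, sL]
  simp only [comp_whiskerRight, Category.assoc]
  rw [T2_natural]
  have key : D.B2 ≫ (z ▷ ι) ▷ κ ≫ (x ▷ ι) ▷ κ ≫ (α_ ι κ ι).hom ▷ κ ≫ (ι ◁ D.evL) ▷ κ ≫
      (ι ◁ D.coevR) ▷ κ ≫ (α_ ι κ ι).inv ▷ κ ≫ D.T2 =
      (D.phiL (z ≫ x)) ▷ κ ≫
        ι ◁ ((λ_ κ).inv ≫ D.coevR ▷ κ ≫ (α_ κ ι κ).hom ≫ κ ◁ D.evR ≫ (ρ_ κ).hom) := by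
    rw [phiL, B2, T2]
    simp only [comp_whiskerRight, Category.assoc]
    bicategory
  rw [reassoc_of% key, D.zig4]
  simp

end FrobeniusDuality


open FrobeniusDuality in
/-- For a D2 Frobenius 1-morphism `ι` with D2 quasi-basis `∑ᵢ yᵢ ⊗ xᵢ`,
the ring homomorphism `s_L : L → A`, `l ↦ l × κ`, is a Frobenius extension: the map
`φ_L(a) = (ι × evL) ∘ (a × ι) ∘ (ι × coevR)` satisfies
`∑ᵢ s_L(φ_L(a ∘ yᵢ)) ∘ xᵢ = a = ∑ᵢ yᵢ ∘ s_L(φ_L(xᵢ ∘ a))`.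
(Vertical composition `u ∘ v` of the paper is `v ≫ u` here.) -/
theorem source_map_frobenius_extension
    {C : Type u} [Bicategory.{w, v} C] [∀ (x y : C), Preadditive (x ⟶ y)]
    (wl : ∀ {x y z : C} (f : x ⟶ y) {g h : y ⟶ z} (η θ : g ⟶ h),
      f ◁ (η + θ) = f ◁ η + f ◁ θ)
    (wr : ∀ {x y z : C} {f g : x ⟶ y} (η θ : f ⟶ g) (h : y ⟶ z),
      (η + θ) ▷ h = η ▷ h + θ ▷ h)
    {a b : C} {ι : a ⟶ b} {κ : b ⟶ a} (D : FrobeniusDuality ι κ)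
    (n : ℕ) (y x : ℕ → (ι ≫ κ ⟶ ι ≫ κ))
    (hqb : ∑ i ∈ Finset.range n, D.d2comp (x i) (y i) = 𝟙 ((ι ≫ κ) ≫ ι)) :
    (∀ l l' : ι ⟶ ι, D.sL (l ≫ l') = D.sL l ≫ D.sL l') ∧
      D.sL (𝟙 ι) = 𝟙 (ι ≫ κ) ∧
      (∀ z : ι ≫ κ ⟶ ι ≫ κ,
        ∑ i ∈ Finset.range n, (x i ≫ D.sL (D.phiL (y i ≫ z))) = z) ∧
      (∀ z : ι ≫ κ ⟶ ι ≫ κ,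
        ∑ i ∈ Finset.range n, (D.sL (D.phiL (z ≫ x i)) ≫ y i) = z) := by
  
  have hsum : (∑ i ∈ Finset.range n, D.d2comp (x i) (y i)) ▷ κ =
      ∑ i ∈ Finset.range n, (D.d2comp (x i) (y i)) ▷ κ :=
    map_sum (AddMonoidHom.mk' (fun w => w ▷ κ) (fun u v => wr u v κ)) _ _
  refine ⟨fun l l' => by simp [sL], by simp [sL], fun z => ?_, fun z => ?_⟩
  · calc ∑ i ∈ Finset.range n, (x i ≫ D.sL (D.phiL (y i ≫ z)))
        = ∑ i ∈ Finset.range n, (D.B1 ≫ (D.d2comp (x i) (y i)) ▷ κ ≫ (z ▷ ι) ▷ κ ≫ D.T1) :=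
          Finset.sum_congr rfl fun i _ => (D.L1b _ _ _).symm
      _ = D.B1 ≫ (∑ i ∈ Finset.range n, D.d2comp (x i) (y i)) ▷ κ ≫ (z ▷ ι) ▷ κ ≫ D.T1 := by
          rw [hsum]; simp [Preadditive.sum_comp, Preadditive.comp_sum]
      _ = z := by rw [hqb]; simpa using D.L1a z
  · calc ∑ i ∈ Finset.range n, (D.sL (D.phiL (z ≫ x i)) ≫ y i)
        = ∑ i ∈ Finset.range n, (D.B2 ≫ (z ▷ ι) ▷ κ ≫ (D.d2comp (x i) (y i)) ▷ κ ≫ D.T2) :=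
          Finset.sum_congr rfl fun i _ => (D.L2b _ _ _).symm
      _ = D.B2 ≫ (z ▷ ι) ▷ κ ≫ (∑ i ∈ Finset.range n, D.d2comp (x i) (y i)) ▷ κ ≫ D.T2 := by
          rw [hsum]; simp [Preadditive.sum_comp, Preadditive.comp_sum]
      _ = z := by rw [hqb]; simpa using D.L2a z
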